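/- A distribution D on Q is geodesically invariant for an affine connection ∇ (every geodesic with initial velocity in D stays in D) if and only if ⟨X : Y⟩ ∈ Γ(D) for every X, Y ∈ Γ(D). -/

import Mathlib

open Set

/-- Covariant derivative `(∇_X Y)(x) = DY(x)·X(x) + Γ(x)(X(x))(Y(x))`. -/
noncomputable def covDeriv {E : Type*} [NormedAddCommGroup E] [NormedSpace ℝ E]
    (Γ : E → E →L[ℝ] E →L[ℝ] E) (X Y : E → E) : E → E :=
  fun x => fderiv ℝ Y x (X x) + Γ x (X x) (Y x)

private lemma alg_key {E : Type*} [NormedAddCommGroup E] [NormedSpace ℝ E]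
    (Γ : E → E →L[ℝ] E →L[ℝ] E)
    (hsym : ∀ x u v, Γ x u v = Γ x v u) (k : ℕ) (F : Fin k → E → E) (y : E)
    (γ : Fin k → Fin k → Fin k → ℝ)
    (hγ : ∀ i j, ∑ l, γ i j l • F l y =
      (fderiv ℝ (F j) y (F i y) + Γ y (F i y) (F j y)) +
      (fderiv ℝ (F i) y (F j y) + Γ y (F j y) (F i y)))
    (w : Fin k → ℝ) :
    ∑ i, (w i • (fderiv ℝ (F i) y (∑ j, w j • F j y))
        + (-(2⁻¹:ℝ) * ∑ i', ∑ j, w i' * w j * γ i' j i) • F i y)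
      = -(Γ y (∑ i, w i • F i y) (∑ j, w j • F j y)) := by
  classical
  set P : Fin k → E := fun i => F i y with hP
  set Dm : Fin k → Fin k → E := fun i j => fderiv ℝ (F i) y (F j y) with hDm
  set G2 : Fin k → Fin k → E := fun i j => Γ y (F i y) (F j y) with hG2
  have hG2sym : ∀ i j, G2 i j = G2 j i := fun i j => hsym y (F i y) (F j y)
  -- first summand
  have e1 : ∀ i, w i • (fderiv ℝ (F i) y (∑ j, w j • F j y))
      = ∑ j, (w i * w j) • Dm i j := by
    intro i
    rw [map_sum, Finset.smul_sum]
    refine Finset.sum_congr rfl fun j _ => ?_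
    rw [(fderiv ℝ (F i) y).map_smul, smul_smul]
  -- second summand reorganization
  have e2 : ∑ i, (-(2⁻¹:ℝ) * ∑ i', ∑ j, w i' * w j * γ i' j i) • P i
      = -(2⁻¹:ℝ) • ∑ i', ∑ j, (w i' * w j) •
          ((Dm j i' + G2 i' j) + (Dm i' j + G2 j i')) := by
    have step1 : ∑ i, (-(2⁻¹:ℝ) * ∑ i', ∑ j, w i' * w j * γ i' j i) • P i
        = -(2⁻¹:ℝ) • ∑ i, (∑ i', ∑ j, w i' * w j * γ i' j i) • P i := by
      rw [Finset.smul_sum]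
      exact Finset.sum_congr rfl fun i _ => by rw [mul_smul]
    rw [step1]
    congr 1
    have step2 : ∑ i, (∑ i', ∑ j, w i' * w j * γ i' j i) • P i
        = ∑ i', ∑ j, (w i' * w j) • (∑ i, γ i' j i • P i) := by
      simp only [Finset.sum_smul]
      rw [Finset.sum_comm]
      refine Finset.sum_congr rfl fun i' _ => ?_
      rw [Finset.sum_comm]
      refine Finset.sum_congr rfl fun j _ => ?_
      rw [Finset.smul_sum]
      refine Finset.sum_congr rfl fun i _ => ?_
      rw [mul_smul]
    rw [step2]
    refine Finset.sum_congr rfl fun i' _ => Finset.sum_congr rfl fun j _ => ?_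
    congr 1
    have := hγ i' j
    simpa [hP, hDm, hG2] using this
  -- RHS expansion
  have e3 : Γ y (∑ i, w i • P i) (∑ j, w j • P j)
      = ∑ i, ∑ j, (w i * w j) • G2 i j := by
    have h1 : Γ y (∑ i, w i • P i) = ∑ i, w i • Γ y (P i) := by
      rw [map_sum]
      exact Finset.sum_congr rfl fun i _ => (Γ y).map_smul (w i) (P i)
    rw [h1, ContinuousLinearMap.sum_apply]
    refine Finset.sum_congr rfl fun i _ => ?_
    rw [ContinuousLinearMap.smul_apply, map_sum, Finset.smul_sum]
    refine Finset.sum_congr rfl fun j _ => ?_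
    rw [(Γ y (P i)).map_smul, smul_smul]
  -- swap identities
  have sDm : ∑ i, ∑ j, (w i * w j) • Dm j i = ∑ i, ∑ j, (w i * w j) • Dm i j := by
    rw [Finset.sum_comm]
    exact Finset.sum_congr rfl fun i _ => Finset.sum_congr rfl fun j _ => by
      rw [mul_comm]
  have sG2 : ∑ i, ∑ j, (w i * w j) • G2 j i = ∑ i, ∑ j, (w i * w j) • G2 i j := by
    exact Finset.sum_congr rfl fun i _ => Finset.sum_congr rfl fun j _ => by
      rw [hG2sym]
  -- put together
  rw [Finset.sum_add_distrib]
  simp only [e1]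
  rw [e2, e3]
  have expand : ∑ i', ∑ j, (w i' * w j) • ((Dm j i' + G2 i' j) + (Dm i' j + G2 j i'))
      = (∑ i, ∑ j, (w i * w j) • Dm j i) + (∑ i, ∑ j, (w i * w j) • G2 i j)
        + ((∑ i, ∑ j, (w i * w j) • Dm i j) + (∑ i, ∑ j, (w i * w j) • G2 j i)) := by
    simp only [smul_add, Finset.sum_add_distrib]
  rw [expand, sDm, sG2]
  set A := ∑ i, ∑ j, (w i * w j) • Dm i j
  set B := ∑ i, ∑ j, (w i * w j) • G2 i j
  have : A + -(2⁻¹:ℝ) • (A + B + (A + B)) = -B := by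
    have h2 : A + B + (A + B) = (2:ℝ) • (A + B) := by
      rw [two_smul]
    rw [h2, smul_smul]
    norm_num
  simpa using this

section aux
variable {E : Type*} [NormedAddCommGroup E] [NormedSpace ℝ E] [FiniteDimensional ℝ E]

private lemma frame_exists (D : E → Submodule ℝ E) (k : ℕ)
    (hrank : ∀ x, Module.finrank ℝ (D x) = k)
    (hspan : ∀ x, ∀ w ∈ D x, ∃ X : E → E,
      AnalyticOnNhd ℝ X Set.univ ∧ X x = w ∧ ∀ y, X y ∈ D y) (x : E) :
    ∃ (F : Fin k → E → E) (coord : E → E → Fin k → ℝ) (U : Set E),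
      IsOpen U ∧ x ∈ U ∧
      (∀ i, AnalyticOnNhd ℝ (F i) Set.univ) ∧
      (∀ i y, F i y ∈ D y) ∧
      (∀ y ∈ U, ∀ w : E, ContDiffAt ℝ 1 (fun p : E × E => coord p.1 p.2) (y, w)) ∧
      (∀ y, coord y 0 = 0) ∧
      (∀ y ∈ U, ∀ w ∈ D y, ∑ i, coord y w i • F i y = w) := by
  classical
  set b := Module.finBasisOfFinrankEq ℝ (D x) (hrank x) with hb
  have hex : ∀ i : Fin k, ∃ X : E → E,
      AnalyticOnNhd ℝ X Set.univ ∧ X x = (b i : E) ∧ ∀ y, X y ∈ D y :=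
    fun i => hspan x (b i) (b i).2
  choose F hFa hFx hFD using hex
  have hFcont : ∀ i, Continuous (F i) := fun i =>
    continuous_iff_continuousAt.2 fun y => ((hFa i) y trivial).continuousAt
  have hFcd : ∀ i, ContDiff ℝ 1 (F i) := fun i =>
    contDiff_iff_contDiffAt.2 fun y => ((hFa i) y trivial).contDiffAt.of_le le_top
  -- linear independence at x
  have hli : LinearIndependent ℝ fun i => F i x := by
    have h1 : LinearIndependent ℝ fun i => ((b i : E)) := by
      have := b.linearIndependent.map' (D x).subtype (Submodule.ker_subtype _)
      exact this
    simpa [hFx] using h1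
  -- the frame map S
  set S : E → ((Fin k → ℝ) →L[ℝ] E) := fun y =>
    ∑ i, ContinuousLinearMap.smulRightL ℝ (Fin k → ℝ) E (ContinuousLinearMap.proj i) (F i y)
    with hSdef
  have hSapp : ∀ y u, S y u = ∑ i, u i • F i y := by
    intro y u
    simp [hSdef, ContinuousLinearMap.sum_apply, ContinuousLinearMap.smulRightL,
      ContinuousLinearMap.smulRight_apply]
  have hScd : ContDiff ℝ 1 S := by
    apply ContDiff.sum
    intro i _
    exact (ContinuousLinearMap.smulRightL ℝ (Fin k → ℝ) E
      (ContinuousLinearMap.proj i)).contDiff.comp (hFcd i)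
  -- left inverse at x
  have hker : LinearMap.ker ((S x : (Fin k → ℝ) →L[ℝ] E) : (Fin k → ℝ) →ₗ[ℝ] E) = ⊥ := by
    rw [LinearMap.ker_eq_bot']
    intro u hu
    have : ∑ i, u i • F i x = 0 := by
      rw [← hSapp]; exact hu
    exact funext (Fintype.linearIndependent_iff.1 hli u this)
  obtain ⟨Llin, hLlin⟩ := LinearMap.exists_leftInverse_of_injective _ hker
  set L : E →L[ℝ] (Fin k → ℝ) := LinearMap.toContinuousLinearMap Llin with hLdef
  have hLS : ∀ u, L (S x u) = u := by
    intro u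
    have := LinearMap.congr_fun hLlin u
    simpa [hLdef] using this
  set M : E → ((Fin k → ℝ) →L[ℝ] (Fin k → ℝ)) := fun y => L.comp (S y) with hMdef
  have hMx : M x = 1 := by
    refine ContinuousLinearMap.ext fun u => ?_
    exact hLS u
  have hMcd : ContDiff ℝ 1 M :=
    (ContinuousLinearMap.compL ℝ (Fin k → ℝ) E (Fin k → ℝ) L).contDiff.comp hScd
  -- open set
  set U : Set E := {y | IsUnit (M y)} ∩ {y | LinearIndependent ℝ fun i => F i y} with hUdef
  have hUo : IsOpen U := by
    apply IsOpen.inter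
    · exact Units.isOpen.preimage hMcd.continuous
    · exact isOpen_setOf_linearIndependent.preimage
        (continuous_pi fun i => hFcont i)
  have hxU : x ∈ U := by
    constructor
    · show IsUnit (M x); rw [hMx]; exact isUnit_one
    · exact hli
  set coord : E → E → Fin k → ℝ := fun y w => Ring.inverse (M y) (L w) with hcoorddef
  -- smoothness
  have hcsm : ∀ y ∈ U, ∀ w : E, ContDiffAt ℝ 1 (fun p : E × E => coord p.1 p.2) (y, w) := by
    intro y hy w
    have hyu : IsUnit (M y) := hy.1
    have h1 : ContDiffAt ℝ 1 (fun p : E × E => Ring.inverse (M p.1)) (y, w) := by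
      have hinv : ContDiffAt ℝ 1 (Ring.inverse :
          ((Fin k → ℝ) →L[ℝ] (Fin k → ℝ)) → ((Fin k → ℝ) →L[ℝ] (Fin k → ℝ))) (M y) := by
        have := contDiffAt_ringInverse ℝ (n := 1) hyu.unit
        simpa [IsUnit.unit_spec] using this
      exact hinv.comp (y, w) ((hMcd.comp contDiff_fst).contDiffAt)
    have h2 : ContDiffAt ℝ 1 (fun p : E × E => L p.2) (y, w) :=
      (L.contDiff.comp contDiff_snd).contDiffAt
    exact h1.clm_apply h2
  have hc0 : ∀ y, coord y 0 = 0 := by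
    intro y
    simp [hcoorddef]
  -- representation
  have hrepr : ∀ y ∈ U, ∀ w ∈ D y, ∑ i, coord y w i • F i y = w := by
    intro y hy w hw
    have hyu : IsUnit (M y) := hy.1
    have hyli : LinearIndependent ℝ fun i => F i y := hy.2
    -- D y = span of frame
    have hle : Submodule.span ℝ (Set.range fun i => F i y) ≤ D y := by
      rw [Submodule.span_le]
      rintro _ ⟨i, rfl⟩
      exact hFD i y
    have hsp : Submodule.span ℝ (Set.range fun i => F i y) = D y := by
      apply Submodule.eq_of_le_of_finrank_le hle
      rw [hrank y, finrank_span_eq_card hyli, Fintype.card_fin]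
    -- w is in the range of S y
    have hrange : Submodule.span ℝ (Set.range fun i => F i y) ≤
        LinearMap.range ((S y : (Fin k → ℝ) →L[ℝ] E) : (Fin k → ℝ) →ₗ[ℝ] E) := by
      rw [Submodule.span_le]
      rintro _ ⟨i, rfl⟩
      refine ⟨Pi.single i 1, ?_⟩
      show S y (Pi.single i 1) = F i y
      rw [hSapp]
      simp [Pi.single_apply, ite_smul]
    obtain ⟨u₀, hu₀⟩ := hrange (hsp ▸ hw)
    have hu₀' : S y u₀ = w := hu₀
    have hcu : coord y w = u₀ := by
      show Ring.inverse (M y) (L w) = u₀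
      have hLw : L w = M y u₀ := by rw [← hu₀']; rfl
      rw [hLw, ← ContinuousLinearMap.mul_apply, Ring.inverse_mul_cancel _ hyu,
        ContinuousLinearMap.one_apply]
    rw [hcu, ← hSapp, hu₀']
  exact ⟨F, coord, U, hUo, hxU, hFa, hFD, hcsm, hc0, hrepr⟩

private lemma mp_dir
    (Γ : E → E →L[ℝ] E →L[ℝ] E) (hΓ : AnalyticOnNhd ℝ Γ Set.univ)
    (hsym : ∀ x u v, Γ x u v = Γ x v u)
    (D : E → Submodule ℝ E) (k : ℕ)
    (hrank : ∀ x, Module.finrank ℝ (D x) = k)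
    (hspan : ∀ x, ∀ w ∈ D x, ∃ X : E → E,
      AnalyticOnNhd ℝ X Set.univ ∧ X x = w ∧ ∀ y, X y ∈ D y)
    (frame_exists : ∀ x : E,
      ∃ (F : Fin k → E → E) (coord : E → E → Fin k → ℝ) (U : Set E),
      IsOpen U ∧ x ∈ U ∧
      (∀ i, AnalyticOnNhd ℝ (F i) Set.univ) ∧
      (∀ i y, F i y ∈ D y) ∧
      (∀ y ∈ U, ∀ w : E, ContDiffAt ℝ 1 (fun p : E × E => coord p.1 p.2) (y, w)) ∧
      (∀ y, coord y 0 = 0) ∧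
      (∀ y ∈ U, ∀ w ∈ D y, ∑ i, coord y w i • F i y = w))
    (hGI : ∀ (c c' : ℝ → E) (a b : ℝ), a ≤ b →
        (∀ t ∈ Set.Icc a b, HasDerivAt c (c' t) t) →
        (∀ t ∈ Set.Icc a b, HasDerivAt c' (-(Γ (c t) (c' t) (c' t))) t) →
        c' a ∈ D (c a) → ∀ t ∈ Set.Icc a b, c' t ∈ D (c t)) :
    ∀ X Y : E → E, AnalyticOnNhd ℝ X Set.univ → (∀ x, X x ∈ D x) →
        AnalyticOnNhd ℝ Y Set.univ → (∀ x, Y x ∈ D x) →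
        ∀ x, covDeriv Γ X Y x + covDeriv Γ Y X x ∈ D x := by
  intro X Y hXa hXD hYa hYD x
  -- main claim : single sections
  have key : ∀ Z : E → E, AnalyticOnNhd ℝ Z Set.univ → (∀ y, Z y ∈ D y) →
      covDeriv Γ Z Z x ∈ D x := by
    intro Z hZa hZD
    obtain ⟨F, coord, U, hUo, hxU, hFa, hFD, hcsm, hc0, hrepr⟩ := frame_exists x
    -- geodesic flow vector field
    set G : E × E → E × E := fun p => (p.2, -(Γ p.1 p.2 p.2)) with hGdef
    have hGc : ContDiff ℝ 1 G := by
      refine ContDiff.prodMk contDiff_snd ?_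
      exact (((hΓ.contDiff.comp contDiff_fst).clm_apply contDiff_snd).clm_apply
        contDiff_snd).neg
    obtain ⟨f, hf0, ε, hε, hf⟩ :=
      ContDiffAt.exists_forall_mem_closedBall_exists_eq_forall_mem_Ioo_hasDerivAt₀ (x₀ := (x, Z x)) hGc.contDiffAt (0 : ℝ)
    rw [zero_sub, zero_add] at hf
    set c : ℝ → E := fun t => (f t).1 with hcdef
    set cd : ℝ → E := fun t => (f t).2 with hcddef
    have hc0' : c 0 = x := by rw [hcdef]; simp [hf0]
    have hcd0 : cd 0 = Z x := by rw [hcddef]; simp [hf0]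
    have hcder : ∀ t ∈ Ioo (-ε) ε, HasDerivAt c (cd t) t := by
      intro t ht
      exact (ContinuousLinearMap.fst ℝ E E).hasFDerivAt.comp_hasDerivAt t (hf t ht)
    have hcdder : ∀ t ∈ Ioo (-ε) ε, HasDerivAt cd (-(Γ (c t) (cd t) (cd t))) t := by
      intro t ht
      exact (ContinuousLinearMap.snd ℝ E E).hasFDerivAt.comp_hasDerivAt t (hf t ht)
    have hsub : Icc (0:ℝ) (ε/2) ⊆ Ioo (-ε) ε := fun t ht =>
      ⟨lt_of_lt_of_le (by linarith) ht.1, lt_of_le_of_lt ht.2 (by linarith)⟩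
    have hmem : ∀ t ∈ Icc (0:ℝ) (ε/2), cd t ∈ D (c t) := by
      apply hGI c cd 0 (ε/2) (by linarith)
      · exact fun t ht => hcder t (hsub ht)
      · exact fun t ht => hcdder t (hsub ht)
      · rw [hc0', hcd0]; exact hZD x
    -- pick δ with c t ∈ U for small t
    have hcont : ContinuousAt c 0 := (hcder 0 ⟨by linarith, hε⟩).continuousAt
    have hUev : ∀ᶠ t in nhds (0:ℝ), c t ∈ U := by
      apply hcont.preimage_mem_nhds
      rw [hc0']
      exact hUo.mem_nhds hxU
    obtain ⟨δ₀, hδ₀, hδU⟩ := Metric.eventually_nhds_iff.1 hUev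
    set δ : ℝ := min (ε/2) (δ₀/2) with hδdef
    have hδpos : 0 < δ := lt_min (by linarith) (by linarith)
    have hδin : ∀ t ∈ Icc (0:ℝ) δ, c t ∈ U := by
      intro t ht
      apply hδU
      have h1 : t ≤ δ₀ / 2 := le_trans ht.2 (min_le_right _ _)
      rw [Real.dist_eq, sub_zero, abs_of_nonneg ht.1]; linarith
    have hδε : ∀ t ∈ Icc (0:ℝ) δ, t ∈ Icc (0:ℝ) (ε/2) := fun t ht =>
      ⟨ht.1, le_trans ht.2 (min_le_left _ _)⟩
    -- the difference curve
    set w : ℝ → E := fun t => Z (c t) - cd t with hwdef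
    have hwD : ∀ t ∈ Icc (0:ℝ) δ, w t ∈ D (c t) := fun t ht =>
      sub_mem (hZD (c t)) (hmem t (hδε t ht))
    have hw0 : w 0 = 0 := by rw [hwdef]; simp [hc0', hcd0]
    set u : ℝ → Fin k → ℝ := fun t => coord (c t) (w t) with hudef
    have hu0 : u 0 = 0 := by
      show coord (c 0) (w 0) = 0
      rw [hc0', hw0]; exact hc0 x
    have hweq : ∀ t ∈ Icc (0:ℝ) δ, w t = ∑ i, u t i • F i (c t) :=
      fun t ht => (hrepr (c t) (hδin t ht) (w t) (hwD t ht)).symm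
    -- derivative of w at 0
    have h0mem : (0:ℝ) ∈ Ioo (-ε) ε := ⟨by linarith, hε⟩
    have hZc : HasDerivAt (fun t => Z (c t)) (fderiv ℝ Z x (Z x)) 0 := by
      have h1 := ((hZa (c 0) trivial).differentiableAt.hasFDerivAt)
      have := h1.comp_hasDerivAt 0 (hcder 0 h0mem)
      simpa [Function.comp_def, hc0', hcd0] using this
    have hwder : HasDerivAt w (covDeriv Γ Z Z x) 0 := by
      have h2 := hcdder 0 h0mem
      rw [hc0', hcd0] at h2
      have := hZc.sub h2
      simpa [covDeriv, sub_neg_eq_add, hwdef, Pi.sub_def] using this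
    -- derivative of u at 0
    have hcurve : HasDerivAt (fun t => (c t, w t)) (Z x, covDeriv Γ Z Z x) 0 := by
      have h1 := hcder 0 h0mem
      rw [hcd0] at h1
      exact h1.prodMk hwder
    have hcsm0 : ContDiffAt ℝ 1 (fun p : E × E => coord p.1 p.2) (x, 0) := hcsm x hxU 0
    have hcd0' : DifferentiableAt ℝ (fun p : E × E => coord p.1 p.2) (x, 0) :=
      hcsm0.differentiableAt one_ne_zero
    set du : Fin k → ℝ :=
      fderiv ℝ (fun p : E × E => coord p.1 p.2) (x, 0) (Z x, covDeriv Γ Z Z x) with hdudef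
    have hcw0 : ((fun t => (c t, w t)) 0) = ((x, 0) : E × E) := by
      show (c 0, w 0) = (x, (0:E))
      rw [hc0', hw0]
    have hfd : HasFDerivAt (fun p : E × E => coord p.1 p.2)
        (fderiv ℝ (fun p : E × E => coord p.1 p.2) (x, 0)) ((fun t => (c t, w t)) 0) := by
      rw [hcw0]
      exact hcd0'.hasFDerivAt
    have huder : HasDerivAt u du 0 := by
      have := hfd.comp_hasDerivAt 0 hcurve
      simpa [Function.comp_def] using this
    -- derivative of the sum expression at 0
    have hFder : ∀ i, HasDerivAt (fun t => F i (c t)) (fderiv ℝ (F i) x (Z x)) 0 := by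
      intro i
      have h1 := ((hFa i) (c 0) trivial).differentiableAt.hasFDerivAt
      have := h1.comp_hasDerivAt 0 (hcder 0 h0mem)
      simpa [Function.comp_def, hc0', hcd0] using this
    have hgder : HasDerivAt (fun t => ∑ i, u t i • F i (c t))
        (∑ i, (u 0 i • fderiv ℝ (F i) x (Z x) + du i • F i (c 0))) 0 := by
      apply HasDerivAt.fun_sum
      intro i _
      have hui : HasDerivAt (fun t => u t i) (du i) 0 :=
        (ContinuousLinearMap.proj i :
          (Fin k → ℝ) →L[ℝ] ℝ).hasFDerivAt.comp_hasDerivAt 0 huder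
      exact hui.smul (hFder i)
    have hgder' : HasDerivAt (fun t => ∑ i, u t i • F i (c t)) (∑ i, du i • F i x) 0 := by
      have : (∑ i, (u 0 i • fderiv ℝ (F i) x (Z x) + du i • F i (c 0)))
          = ∑ i, du i • F i x := by
        rw [hc0']
        refine Finset.sum_congr rfl fun i _ => ?_
        rw [hu0]
        simp
      rwa [this] at hgder
    -- identify the two derivatives within Ici 0
    have hIcc : Icc (0:ℝ) δ ∈ nhdsWithin (0:ℝ) (Ici 0) := Icc_mem_nhdsGE hδpos
    have hev : w =ᶠ[nhdsWithin (0:ℝ) (Ici 0)] fun t => ∑ i, u t i • F i (c t) :=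
      Filter.eventuallyEq_of_mem hIcc fun t ht => hweq t ht
    have h1 : HasDerivWithinAt w (covDeriv Γ Z Z x) (Ici 0) 0 := hwder.hasDerivWithinAt
    have h2 : HasDerivWithinAt w (∑ i, du i • F i x) (Ici 0) 0 := by
      refine hgder'.hasDerivWithinAt.congr_of_eventuallyEq hev ?_
      rw [hw0, hu0]; simp
    have hud : UniqueDiffWithinAt ℝ (Ici (0:ℝ)) 0 := uniqueDiffOn_Ici 0 0 self_mem_Ici
    have heq : covDeriv Γ Z Z x = ∑ i, du i • F i x := by
      rw [← h1.derivWithin hud, ← h2.derivWithin hud]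
    rw [heq]
    exact Submodule.sum_mem _ fun i _ => Submodule.smul_mem _ _ (hFD i x)
  -- polarization
  have hX := key X hXa hXD
  have hY := key Y hYa hYD
  have hXY := key (fun y => X y + Y y) (fun y hy => ((hXa y hy).add (hYa y hy)))
    (fun y => add_mem (hXD y) (hYD y))
  have e1 : covDeriv Γ (fun y => X y + Y y) (fun y => X y + Y y) x
      = covDeriv Γ X X x + covDeriv Γ Y Y x + (covDeriv Γ X Y x + covDeriv Γ Y X x) := by
    simp only [covDeriv]
    rw [fderiv_fun_add ((hXa x trivial).differentiableAt) ((hYa x trivial).differentiableAt)]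
    simp only [ContinuousLinearMap.add_apply, map_add]
    abel
  have : covDeriv Γ X Y x + covDeriv Γ Y X x
      = covDeriv Γ (fun y => X y + Y y) (fun y => X y + Y y) x
          - covDeriv Γ X X x - covDeriv Γ Y Y x := by
    rw [e1]; abel
  rw [this]
  exact sub_mem (sub_mem hXY hX) hY

private lemma local_step
    (Γ : E → E →L[ℝ] E →L[ℝ] E) (hΓ : AnalyticOnNhd ℝ Γ Set.univ)
    (hsym : ∀ x u v, Γ x u v = Γ x v u)
    (D : E → Submodule ℝ E) (k : ℕ)
    (frame_exists : ∀ x : E,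
      ∃ (F : Fin k → E → E) (coord : E → E → Fin k → ℝ) (U : Set E),
      IsOpen U ∧ x ∈ U ∧
      (∀ i, AnalyticOnNhd ℝ (F i) Set.univ) ∧
      (∀ i y, F i y ∈ D y) ∧
      (∀ y ∈ U, ∀ w : E, ContDiffAt ℝ 1 (fun p : E × E => coord p.1 p.2) (y, w)) ∧
      (∀ y, coord y 0 = 0) ∧
      (∀ y ∈ U, ∀ w ∈ D y, ∑ i, coord y w i • F i y = w))
    (hSP : ∀ X Y : E → E, AnalyticOnNhd ℝ X Set.univ → (∀ x, X x ∈ D x) →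
        AnalyticOnNhd ℝ Y Set.univ → (∀ x, Y x ∈ D x) →
        ∀ x, covDeriv Γ X Y x + covDeriv Γ Y X x ∈ D x)
    (c c' : ℝ → E) (t₀ B : ℝ) (htB : t₀ < B)
    (hc : ∀ t ∈ Icc t₀ B, HasDerivAt c (c' t) t)
    (hc' : ∀ t ∈ Icc t₀ B, HasDerivAt c' (-(Γ (c t) (c' t) (c' t))) t)
    (h0 : c' t₀ ∈ D (c t₀)) :
    ∃ δ > 0, t₀ + δ ≤ B ∧ ∀ s ∈ Icc t₀ (t₀ + δ), c' s ∈ D (c s) := by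
  classical
  obtain ⟨F, coord, U, hUo, hxU, hFa, hFD, hcsm, hc0, hrepr⟩ := frame_exists (c t₀)
  have hana_cd : ∀ (X : E → E), AnalyticOnNhd ℝ X Set.univ → ContDiff ℝ 1 X := fun X hX =>
    contDiff_iff_contDiffAt.2 fun y => (hX y trivial).contDiffAt.of_le le_top
  have hFcd : ∀ i, ContDiff ℝ 1 (F i) := fun i => hana_cd _ (hFa i)
  have hfdcd : ∀ (Y : E → E), AnalyticOnNhd ℝ Y Set.univ → ContDiff ℝ 1 (fderiv ℝ Y) :=
    fun Y hY => contDiff_iff_contDiffAt.2 fun y =>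
      ((hY.fderiv) y trivial).contDiffAt.of_le le_top
  have hΓcd : ContDiff ℝ 1 Γ :=
    contDiff_iff_contDiffAt.2 fun y => (hΓ y trivial).contDiffAt.of_le le_top
  -- the symmetric products of frame fields
  set σ : Fin k → Fin k → E → E := fun i j y =>
    covDeriv Γ (F i) (F j) y + covDeriv Γ (F j) (F i) y with hσdef
  have hσD : ∀ i j y, σ i j y ∈ D y := fun i j y =>
    hSP (F i) (F j) (hFa i) (fun z => hFD i z) (hFa j) (fun z => hFD j z) y
  have hcovcd : ∀ (X Y : E → E), AnalyticOnNhd ℝ X Set.univ → AnalyticOnNhd ℝ Y Set.univ →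
      ContDiff ℝ 1 (covDeriv Γ X Y) := by
    intro X Y hX hY
    show ContDiff ℝ 1 fun y => fderiv ℝ Y y (X y) + Γ y (X y) (Y y)
    exact ((hfdcd Y hY).clm_apply (hana_cd X hX)).add
      ((hΓcd.clm_apply (hana_cd X hX)).clm_apply (hana_cd Y hY))
  have hσcd : ∀ i j, ContDiff ℝ 1 (σ i j) := fun i j =>
    (hcovcd (F i) (F j) (hFa i) (hFa j)).add (hcovcd (F j) (F i) (hFa j) (hFa i))
  -- coefficient functions
  set γ : Fin k → Fin k → E → Fin k → ℝ := fun i j y => coord y (σ i j y) with hγdef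
  have hγrepr : ∀ i j, ∀ y ∈ U, ∑ l, γ i j y l • F l y = σ i j y :=
    fun i j y hy => hrepr y hy _ (hσD i j y)
  have hγcd : ∀ i j, ∀ y ∈ U, ContDiffAt ℝ 1 (γ i j) y := by
    intro i j y hy
    have h1 : ContDiffAt ℝ 1 (fun p : E × E => coord p.1 p.2) (y, σ i j y) :=
      hcsm y hy (σ i j y)
    have h2 : ContDiffAt ℝ 1 (fun z : E => ((z, σ i j z) : E × E)) y :=
      contDiffAt_id.prodMk (hσcd i j).contDiffAt
    exact h1.comp y h2
  -- the auxiliary vector field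
  set VF : E × (Fin k → ℝ) → E × (Fin k → ℝ) := fun p =>
    (∑ i, p.2 i • F i p.1,
      fun l => -(2⁻¹:ℝ) * ∑ i, ∑ j, p.2 i * p.2 j * γ i j p.1 l) with hVFdef
  set u₀ : Fin k → ℝ := coord (c t₀) (c' t₀) with hu₀def
  have hu₀ : ∑ i, u₀ i • F i (c t₀) = c' t₀ := hrepr (c t₀) hxU _ h0
  have hVFcd : ContDiffAt ℝ 1 VF ((c t₀, u₀) : E × (Fin k → ℝ)) := by
    apply ContDiffAt.prodMk
    · apply ContDiffAt.sum
      intro i _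
      have h1 : ContDiff ℝ 1 (fun p : E × (Fin k → ℝ) => p.2 i) :=
        ((ContinuousLinearMap.proj i :
          (Fin k → ℝ) →L[ℝ] ℝ).comp (ContinuousLinearMap.snd ℝ E (Fin k → ℝ))).contDiff
      have h2 : ContDiff ℝ 1 (fun p : E × (Fin k → ℝ) => F i p.1) :=
        (hFcd i).comp contDiff_fst
      exact (h1.smul h2).contDiffAt
    · apply contDiffAt_pi.2
      intro l
      apply ContDiffAt.mul contDiffAt_const
      apply ContDiffAt.sum
      intro i _
      apply ContDiffAt.sum
      intro j _
      have h1 : ContDiff ℝ 1 (fun p : E × (Fin k → ℝ) => p.2 i) :=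
        ((ContinuousLinearMap.proj i :
          (Fin k → ℝ) →L[ℝ] ℝ).comp (ContinuousLinearMap.snd ℝ E (Fin k → ℝ))).contDiff
      have h2 : ContDiff ℝ 1 (fun p : E × (Fin k → ℝ) => p.2 j) :=
        ((ContinuousLinearMap.proj j :
          (Fin k → ℝ) →L[ℝ] ℝ).comp (ContinuousLinearMap.snd ℝ E (Fin k → ℝ))).contDiff
      have h3 : ContDiffAt ℝ 1 (fun p : E × (Fin k → ℝ) => γ i j p.1 l) (c t₀, u₀) := by
        have ha : ContDiffAt ℝ 1 (fun v : Fin k → ℝ => v l) (γ i j (c t₀)) :=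
          (ContinuousLinearMap.proj l : (Fin k → ℝ) →L[ℝ] ℝ).contDiff.contDiffAt
        have hb : ContDiffAt ℝ 1 (fun p : E × (Fin k → ℝ) => γ i j p.1) (c t₀, u₀) :=
          ContDiffAt.comp ((c t₀, u₀) : E × (Fin k → ℝ)) (hγcd i j (c t₀) hxU) contDiffAt_fst
        exact ContDiffAt.comp ((c t₀, u₀) : E × (Fin k → ℝ)) ha hb
      exact ((h1.contDiffAt.mul h2.contDiffAt).mul h3)
  -- solve the auxiliary ODE
  obtain ⟨f, hf0, ε, hε, hf⟩ :=
    ContDiffAt.exists_forall_mem_closedBall_exists_eq_forall_mem_Ioo_hasDerivAt₀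
      (x₀ := ((c t₀, u₀) : E × (Fin k → ℝ))) hVFcd t₀
  set q : ℝ → E := fun t => (f t).1 with hqdef
  set u : ℝ → Fin k → ℝ := fun t => (f t).2 with hudef
  set vv : ℝ → E := fun t => ∑ i, u t i • F i (q t) with hvvdef
  have hq0 : q t₀ = c t₀ := by rw [hqdef]; simp [hf0]
  have hu0 : u t₀ = u₀ := by rw [hudef]; simp [hf0]
  have hvv0 : vv t₀ = c' t₀ := by rw [hvvdef]; simp only [hq0, hu0]; exact hu₀
  have hqder : ∀ t ∈ Ioo (t₀ - ε) (t₀ + ε), HasDerivAt q (vv t) t := by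
    intro t ht
    have := (ContinuousLinearMap.fst ℝ E (Fin k → ℝ)).hasFDerivAt.comp_hasDerivAt t (hf t ht)
    exact this
  have huder : ∀ t ∈ Ioo (t₀ - ε) (t₀ + ε), HasDerivAt u
      (fun l => -(2⁻¹:ℝ) * ∑ i, ∑ j, u t i * u t j * γ i j (q t) l) t := by
    intro t ht
    have := (ContinuousLinearMap.snd ℝ E (Fin k → ℝ)).hasFDerivAt.comp_hasDerivAt t (hf t ht)
    exact this
  -- shrink to stay in U
  have ht₀Ioo : t₀ ∈ Ioo (t₀ - ε) (t₀ + ε) := ⟨by linarith, by linarith⟩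
  have hqcont : ContinuousAt q t₀ := (hqder t₀ ht₀Ioo).continuousAt
  have hUev : ∀ᶠ t in nhds t₀, q t ∈ U := by
    apply hqcont.preimage_mem_nhds
    rw [hq0]
    exact hUo.mem_nhds hxU
  obtain ⟨δ₀, hδ₀, hδU⟩ := Metric.eventually_nhds_iff.1 hUev
  set δ₁ : ℝ := min (ε/2) (δ₀/2) with hδ₁def
  have hδ₁pos : 0 < δ₁ := lt_min (by linarith) (by linarith)
  have hδ₁U : ∀ t ∈ Icc t₀ (t₀ + δ₁), q t ∈ U := by
    intro t ht
    apply hδU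
    have h2 : t - t₀ ≤ δ₀/2 := by
      have := ht.2
      have h3 : δ₁ ≤ δ₀/2 := min_le_right _ _
      linarith
    rw [Real.dist_eq, abs_of_nonneg (by linarith [ht.1, ht.2] : (0:ℝ) ≤ t - t₀)]
    linarith
  have hδ₁Ioo : ∀ t ∈ Icc t₀ (t₀ + δ₁), t ∈ Ioo (t₀ - ε) (t₀ + ε) := by
    intro t ht
    have h3 : δ₁ ≤ ε/2 := min_le_left _ _
    exact ⟨by linarith [ht.1], by linarith [ht.2]⟩
  -- vv solves the geodesic equation
  have hvvder : ∀ t ∈ Icc t₀ (t₀ + δ₁), HasDerivAt vv (-(Γ (q t) (vv t) (vv t))) t := by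
    intro t ht
    have htI := hδ₁Ioo t ht
    have hsum : HasDerivAt (fun s => ∑ i, u s i • F i (q s))
        (∑ i, (u t i • (fderiv ℝ (F i) (q t) (vv t))
          + (fun l => -(2⁻¹:ℝ) * ∑ i', ∑ j, u t i' * u t j * γ i' j (q t) l) i • F i (q t))) t := by
      apply HasDerivAt.fun_sum
      intro i _
      have hui : HasDerivAt (fun s => u s i)
          ((fun l => -(2⁻¹:ℝ) * ∑ i', ∑ j, u t i' * u t j * γ i' j (q t) l) i) t :=
        (ContinuousLinearMap.proj i :
          (Fin k → ℝ) →L[ℝ] ℝ).hasFDerivAt.comp_hasDerivAt t (huder t htI)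
      have hFi : HasDerivAt (fun s => F i (q s)) (fderiv ℝ (F i) (q t) (vv t)) t := by
        have h1 := ((hFa i) (q t) trivial).differentiableAt.hasFDerivAt
        have := h1.comp_hasDerivAt t (hqder t htI)
        exact this
      exact hui.smul hFi
    have halg := alg_key Γ hsym k F (q t) (fun i' j l => γ i' j (q t) l)
      (fun i j => by
        have := hγrepr i j (q t) (hδ₁U t ht)
        simpa [hσdef, covDeriv] using this) (u t)
    rw [halg] at hsum
    exact hsum
  -- uniqueness of geodesics
  set G : E × E → E × E := fun p => (p.2, -(Γ p.1 p.2 p.2)) with hGdef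
  have hGcd : ContDiff ℝ 1 G := by
    refine ContDiff.prodMk contDiff_snd ?_
    exact (((hΓcd.comp contDiff_fst).clm_apply contDiff_snd).clm_apply contDiff_snd).neg
  obtain ⟨K, sSet, hsSet, hlip⟩ :=
    hGcd.contDiffAt (x := ((c t₀, c' t₀) : E × E)).exists_lipschitzOnWith
  set z₁ : ℝ → E × E := fun t => (c t, c' t) with hz₁def
  set z₂ : ℝ → E × E := fun t => (q t, vv t) with hz₂def
  have ht₀B : t₀ ∈ Icc t₀ B := ⟨le_refl _, le_of_lt htB⟩
  have hz₁cont : ContinuousAt z₁ t₀ := ((hc t₀ ht₀B).prodMk (hc' t₀ ht₀B)).continuousAt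
  have ht₀δ₁ : t₀ ∈ Icc t₀ (t₀ + δ₁) := ⟨le_refl _, by linarith⟩
  have hz₂cont : ContinuousAt z₂ t₀ :=
    ((hqder t₀ ht₀Ioo).prodMk (hvvder t₀ ht₀δ₁)).continuousAt
  have hz₂0 : z₂ t₀ = z₁ t₀ := by
    rw [hz₂def, hz₁def]
    show ((q t₀, vv t₀) : E × E) = (c t₀, c' t₀)
    rw [hq0, hvv0]
  have hev₁ : ∀ᶠ t in nhds t₀, z₁ t ∈ sSet := hz₁cont.preimage_mem_nhds hsSet
  have hev₂ : ∀ᶠ t in nhds t₀, z₂ t ∈ sSet := by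
    apply hz₂cont.preimage_mem_nhds
    rw [hz₂0]
    exact hsSet
  obtain ⟨δ₂, hδ₂, hδ₂mem⟩ := Metric.eventually_nhds_iff.1 (hev₁.and hev₂)
  set δ : ℝ := min δ₁ (min (δ₂/2) (B - t₀)) with hδdef
  have hδpos : 0 < δ := lt_min hδ₁pos (lt_min (by linarith) (by linarith))
  have hδle₁ : δ ≤ δ₁ := min_le_left _ _
  have hδle₂ : δ ≤ δ₂/2 := le_trans (min_le_right _ _) (min_le_left _ _)
  have hδleB : t₀ + δ ≤ B := by
    have := le_trans (min_le_right δ₁ _) (min_le_right (δ₂/2) (B - t₀))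
    linarith
  have hIccB : Icc t₀ (t₀ + δ) ⊆ Icc t₀ B := fun t ht => ⟨ht.1, le_trans ht.2 hδleB⟩
  have hIccδ₁ : Icc t₀ (t₀ + δ) ⊆ Icc t₀ (t₀ + δ₁) := fun t ht =>
    ⟨ht.1, le_trans ht.2 (by linarith)⟩
  have hdist : ∀ t ∈ Icc t₀ (t₀ + δ), dist t t₀ < δ₂ := by
    intro t ht
    rw [Real.dist_eq, abs_of_nonneg (by linarith [ht.1] : (0:ℝ) ≤ t - t₀)]
    have := ht.2
    linarith
  have huniq : EqOn z₁ z₂ (Icc t₀ (t₀ + δ)) := by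
    apply ODE_solution_unique_of_mem_Icc_right
      (v := fun _ p => G p) (s := fun _ => sSet) (K := K)
    · exact fun _ _ => hlip
    · intro t ht
      exact ((hc t (hIccB ht)).prodMk (hc' t (hIccB ht))).continuousAt.continuousWithinAt
    · intro t ht
      have := ((hc t (hIccB (Ico_subset_Icc_self ht))).prodMk
        (hc' t (hIccB (Ico_subset_Icc_self ht)))).hasDerivWithinAt (s := Ici t)
      exact this
    · exact fun t ht => (hδ₂mem (hdist t (Ico_subset_Icc_self ht))).1
    · intro t ht
      exact ((hqder t (hδ₁Ioo t (hIccδ₁ ht))).prodMk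
        (hvvder t (hIccδ₁ ht))).continuousAt.continuousWithinAt
    · intro t ht
      have := ((hqder t (hδ₁Ioo t (hIccδ₁ (Ico_subset_Icc_self ht)))).prodMk
        (hvvder t (hIccδ₁ (Ico_subset_Icc_self ht)))).hasDerivWithinAt (s := Ici t)
      exact this
    · exact fun t ht => (hδ₂mem (hdist t (Ico_subset_Icc_self ht))).2
    · exact hz₂0.symm
  refine ⟨δ, hδpos, hδleB, ?_⟩
  intro s hs
  have heq := huniq hs
  have hcq : c s = q s := congrArg Prod.fst heq
  have hcv : c' s = vv s := congrArg Prod.snd heq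
  rw [hcv, hcq]
  exact Submodule.sum_mem _ fun i _ => Submodule.smul_mem _ _ (hFD i (q s))

end aux

/-- for an analytic affine connection `∇` (Christoffel data `Γ`) on an
analytic manifold `Q = E` and an analytic constant-rank distribution `D`, the
distribution `D` is geodesically invariant (every geodesic with initial velocity in `D`
keeps its velocity in `D`) if and only if `⟨X : Y⟩ = ∇_X Y + ∇_Y X ∈ Γ(D)` for all
analytic sections `X, Y` of `D`. -/
theorem stmt_10 {E : Type*} [NormedAddCommGroup E] [NormedSpace ℝ E]
    [FiniteDimensional ℝ E]
    (Γ : E → E →L[ℝ] E →L[ℝ] E) (hΓ : AnalyticOnNhd ℝ Γ Set.univ)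
    (hsym : ∀ x u v, Γ x u v = Γ x v u)
    (D : E → Submodule ℝ E) (k : ℕ)
    (hrank : ∀ x, Module.finrank ℝ (D x) = k)
    -- `D` is an analytic distribution: it is pointwise spanned by analytic sections
    (hspan : ∀ x, ∀ w ∈ D x, ∃ X : E → E,
      AnalyticOnNhd ℝ X Set.univ ∧ X x = w ∧ ∀ y, X y ∈ D y) :
    -- geodesic invariance
    (∀ (c c' : ℝ → E) (a b : ℝ), a ≤ b →
        (∀ t ∈ Set.Icc a b, HasDerivAt c (c' t) t) →
        (∀ t ∈ Set.Icc a b, HasDerivAt c' (-(Γ (c t) (c' t) (c' t))) t) →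
        c' a ∈ D (c a) → ∀ t ∈ Set.Icc a b, c' t ∈ D (c t))
    ↔
    -- closedness under the symmetric product
    (∀ X Y : E → E, AnalyticOnNhd ℝ X Set.univ → (∀ x, X x ∈ D x) →
        AnalyticOnNhd ℝ Y Set.univ → (∀ x, Y x ∈ D x) →
        ∀ x, covDeriv Γ X Y x + covDeriv Γ Y X x ∈ D x) := by
  have hframe := frame_exists D k hrank hspan
  constructor
  · exact fun hGI => mp_dir Γ hΓ hsym D k hrank hspan hframe hGI
  · intro hSP c c' a b hab hc hc' h0
    set A := {t | t ∈ Icc a b ∧ ∀ s ∈ Icc a t, c' s ∈ D (c s)} with hAdef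
    have haA : a ∈ A := by
      refine ⟨⟨le_refl a, hab⟩, fun s hs => ?_⟩
      have : s = a := le_antisymm hs.2 hs.1
      rwa [this]
    have hbdd : BddAbove A := ⟨b, fun t ht => ht.1.2⟩
    have hne : A.Nonempty := ⟨a, haA⟩
    set m := sSup A with hmdef
    have ham : a ≤ m := le_csSup hbdd haA
    have hmb : m ≤ b := csSup_le hne fun t ht => ht.1.2
    have hltm : ∀ s, a ≤ s → s < m → c' s ∈ D (c s) := by
      intro s hsa hsm
      obtain ⟨t, htA, hst⟩ := exists_lt_of_lt_csSup hne hsm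
      exact htA.2 s ⟨hsa, le_of_lt hst⟩
    have hmmem : c' m ∈ D (c m) := by
      rcases eq_or_lt_of_le ham with heq | hamlt
      · rw [← heq]; exact h0
      · obtain ⟨F, coord, U, hUo, hxU, hFa, hFD, hcsm, hc0, hrepr⟩ := hframe (c m)
        have hmIcc : m ∈ Icc a b := ⟨ham, hmb⟩
        have hccont : ContinuousAt c m := (hc m hmIcc).continuousAt
        have hcdcont : ContinuousAt c' m := (hc' m hmIcc).continuousAt
        set Φ : ℝ → E := fun s => (∑ i, coord (c s) (c' s) i • F i (c s)) - c' s with hΦdef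
        have hΦcont : ContinuousAt Φ m := by
          refine ContinuousAt.sub ?_ hcdcont
          refine tendsto_finset_sum _ fun i _ => ?_
          refine ContinuousAt.smul ?_ ?_
          · have h1 : ContinuousAt (fun p : E × E => coord p.1 p.2) (c m, c' m) :=
              (hcsm (c m) hxU (c' m)).continuousAt
            have h2 : ContinuousAt (fun s => ((c s, c' s) : E × E)) m :=
              hccont.prodMk hcdcont
            have h3 := ContinuousAt.comp (f := fun s => ((c s, c' s) : E × E)) h1 h2
            have h4 : ContinuousAt (fun v : Fin k → ℝ => v i) (coord (c m) (c' m)) :=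
              (continuous_apply i).continuousAt
            exact ContinuousAt.comp (f := fun s => coord (c s) (c' s)) (x := m) h4 h3
          · have h5 : Continuous (F i) :=
              continuous_iff_continuousAt.2 fun y => ((hFa i) y trivial).continuousAt
            exact ContinuousAt.comp (h5.continuousAt) hccont
        have hΦ0 : ∀ᶠ s in nhdsWithin m (Iio m), Φ s = 0 := by
          have hU'' : ∀ᶠ s in nhds m, c s ∈ U :=
            hccont.preimage_mem_nhds (hUo.mem_nhds hxU)
          have hU' : ∀ᶠ s in nhdsWithin m (Iio m), c s ∈ U :=
            Filter.Eventually.filter_mono nhdsWithin_le_nhds hU''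
          have hIoi' : ∀ᶠ s in nhds m, s ∈ Ioi a := isOpen_Ioi.eventually_mem hamlt
          have hIoi : ∀ᶠ s in nhdsWithin m (Iio m), a < s :=
            Filter.Eventually.filter_mono nhdsWithin_le_nhds hIoi'
          have hIio : ∀ᶠ s in nhdsWithin m (Iio m), s < m :=
            eventually_mem_nhdsWithin
          filter_upwards [hU', hIoi, hIio] with s hsU hsa hsm
          have hmem : c' s ∈ D (c s) := hltm s (le_of_lt hsa) hsm
          have := hrepr (c s) hsU (c' s) hmem
          rw [hΦdef]
          simp only
          rw [this, sub_self]
        have hT1 : Filter.Tendsto Φ (nhdsWithin m (Iio m)) (nhds (Φ m)) :=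
          hΦcont.continuousWithinAt.tendsto
        have hT2 : Filter.Tendsto Φ (nhdsWithin m (Iio m)) (nhds 0) :=
          Filter.Tendsto.congr' (Filter.EventuallyEq.symm hΦ0) tendsto_const_nhds
        have hΦm : Φ m = 0 := tendsto_nhds_unique hT1 hT2
        have hcm : c' m = ∑ i, coord (c m) (c' m) i • F i (c m) := by
          have := sub_eq_zero.1 hΦm
          exact this.symm
        rw [hcm]
        exact Submodule.sum_mem _ fun i _ => Submodule.smul_mem _ _ (hFD i (c m))
    have hmA : m ∈ A := by
      refine ⟨⟨ham, hmb⟩, fun s hs => ?_⟩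
      rcases lt_or_eq_of_le hs.2 with h | h
      · exact hltm s hs.1 h
      · rw [h]; exact hmmem
    have hmeqb : m = b := by
      by_contra hne'
      have hmltb : m < b := lt_of_le_of_ne hmb hne'
      obtain ⟨δ, hδpos, hδB, hδmem⟩ := local_step Γ hΓ hsym D k hframe hSP c c' m b hmltb
        (fun t ht => hc t ⟨le_trans ham ht.1, ht.2⟩)
        (fun t ht => hc' t ⟨le_trans ham ht.1, ht.2⟩) hmmem
      have hA' : m + δ ∈ A := by
        refine ⟨⟨by linarith, hδB⟩, ?_⟩
        intro s hs
        rcases le_or_gt s m with h | h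
        · exact hmA.2 s ⟨hs.1, h⟩
        · exact hδmem s ⟨le_of_lt h, hs.2⟩
      have := le_csSup hbdd hA'
      linarith
    intro t ht
    exact hmA.2 t ⟨ht.1, hmeqb ▸ ht.2⟩
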